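/- Let d be a positive odd squarefree integer, n ≥ 1, p an odd prime with p ∤ d, and k ≥ 1. Let R = ℤ[√-d]/(p^k) with σ the ring endomorphism induced by conjugation, and let L = diag(1,…,1,-1) of size n+1. Then the number of matrices A ∈ M_{n+1}(R) with A·L·σ(A)ᵀ = L equals p^{k-1}·(p - χ) times the number of such matrices that in addition satisfy det A = 1, where χ = (-d/p) is the Legendre symbol. -/

import Mathlib

open Matrix

/-- The quotient ring `ℤ[√-d]/(m)`. -/
abbrev Rq (d m : ℤ) : Type := Zsqrtd (-d) ⧸ Ideal.span {(m : Zsqrtd (-d))}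

/-- Conjugation `a + b√-d ↦ a - b√-d` descends to the quotient `ℤ[√-d]/(m)`. -/
noncomputable def conjQ (d m : ℤ) : Rq d m →+* Rq d m :=
  Ideal.quotientMap (Ideal.span {(m : Zsqrtd (-d))}) (starRingEnd (Zsqrtd (-d)))
    (by
      rw [Ideal.span_singleton_le_iff_mem, Ideal.mem_comap, map_intCast]
      exact Ideal.mem_span_singleton_self _)

/-- The diagonal matrix `diag(1, …, 1, -1)` of size `n+1`. -/
def Lmat (R : Type*) [Ring R] (n : ℕ) : Matrix (Fin (n + 1)) (Fin (n + 1)) R :=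
  Matrix.diagonal fun i => if i = Fin.last n then -1 else 1


open Finset

section Helpers

/-- Fiber-counting: if every fiber of `f` has `c` elements, `#α = c * #β`. -/
lemma card_eq_mul_of_fibers {α β : Type*} [Fintype α] [Fintype β] [DecidableEq β]
    (f : α → β) (c : ℕ) (h : ∀ b, Nat.card {a // f a = b} = c) :
    Nat.card α = c * Nat.card β := by
  classical
  rw [Nat.card_eq_fintype_card, Nat.card_eq_fintype_card,
    Fintype.card_congr (Equiv.sigmaFiberEquiv f).symm, Fintype.card_sigma]
  have : ∀ b : β, Fintype.card {a // f a = b} = c := fun b => by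
    rw [← Nat.card_eq_fintype_card, h]
  simp [this, mul_comm]

/-- Number of solutions of a nondegenerate linear equation in two variables over a field. -/
lemma card_linear {F : Type*} [Field F] [Fintype F] (a₀ a₁ a₂ : F)
    (h : a₁ ≠ 0 ∨ a₂ ≠ 0) :
    Nat.card {t : F × F // a₀ + a₁ * t.1 + a₂ * t.2 = 0} = Fintype.card F := by
  rcases h with h | h
  · have e : {t : F × F // a₀ + a₁ * t.1 + a₂ * t.2 = 0} ≃ F :=
    { toFun := fun t => t.1.2
      invFun := fun s => ⟨(-(a₁⁻¹ * (a₀ + a₂ * s)), s), by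
        simp only [mul_neg, ← mul_assoc, mul_inv_cancel₀ h, one_mul]; ring⟩
      left_inv := fun t => by
        ext
        · have := t.2
          have h2 : a₁ * t.1.1 = -(a₀ + a₂ * t.1.2) := by linear_combination this
          field_simp [h2]
          linear_combination -this
        · rfl
      right_inv := fun s => rfl }
    rw [Nat.card_congr e, Nat.card_eq_fintype_card]
  · have e : {t : F × F // a₀ + a₁ * t.1 + a₂ * t.2 = 0} ≃ F :=
    { toFun := fun t => t.1.1
      invFun := fun s => ⟨(s, -(a₂⁻¹ * (a₀ + a₁ * s))), by
        simp only [mul_neg, ← mul_assoc, mul_inv_cancel₀ h, one_mul]; ring⟩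
      left_inv := fun t => by
        ext
        · rfl
        · have := t.2
          have h2 : a₂ * t.1.2 = -(a₀ + a₁ * t.1.1) := by linear_combination this
          field_simp [h2]
          linear_combination -this
      right_inv := fun s => rfl }
    rw [Nat.card_congr e, Nat.card_eq_fintype_card]

end Helpers

section Conic

variable {F : Type*} [Field F] [Fintype F] [DecidableEq F]

lemma card_sqrts (hF : ringChar F ≠ 2) (a : F) :
    ((Nat.card {x : F // x ^ 2 = a} : ℤ)) = quadraticChar F a + 1 := by
  rw [← quadraticChar_card_sqrts hF a]
  norm_cast
  rw [Set.toFinset_card, Nat.card_eq_fintype_card]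
  exact Fintype.card_congr (Equiv.subtypeEquivRight fun x => by simp)

lemma quadChar_inv_self (hF : ringChar F ≠ 2) : (quadraticChar F)⁻¹ = quadraticChar F := by
  symm
  rw [eq_inv_iff_mul_eq_one]
  apply MulChar.ext
  intro a
  rw [MulChar.mul_apply, MulChar.one_apply_coe, ← sq]
  exact quadraticChar_sq_one a.ne_zero

lemma quadChar_inv_val (u : F) (hu : u ≠ 0) :
    quadraticChar F u⁻¹ = quadraticChar F u := by
  have : u⁻¹ = u * (u⁻¹) ^ 2 := by field_simp
  rw [this, _root_.map_mul, _root_.map_pow, quadraticChar_sq_one (inv_ne_zero hu), mul_one]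

lemma sum_quadChar_affine_sq (hF : ringChar F ≠ 2) (u : F) (hu : u ≠ 0) :
    ∑ y : F, quadraticChar F (1 - u * y ^ 2) = -quadraticChar F (-u) := by
  classical
  have key : ∑ y : F, quadraticChar F (1 - u * y ^ 2)
      = ∑ b : F, ((Finset.univ.filter (fun y : F => y ^ 2 = b)).card : ℤ) •
          quadraticChar F (1 - u * b) := by
    rw [Finset.sum_comp (fun b => quadraticChar F (1 - u * b)) (fun y : F => y ^ 2)]
    rw [Finset.sum_subset (Finset.subset_univ _)]
    · simp
    · intro b _ hb
      have : (Finset.univ.filter (fun y : F => y ^ 2 = b)).card = 0 := by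
        rw [Finset.card_eq_zero, Finset.filter_eq_empty_iff]
        intro y _
        intro hy
        exact hb (Finset.mem_image.mpr ⟨y, Finset.mem_univ y, hy⟩)
      simp [this]
  have hcard : ∀ b : F, ((Finset.univ.filter (fun y : F => y ^ 2 = b)).card : ℤ)
      = quadraticChar F b + 1 := by
    intro b
    rw [← quadraticChar_card_sqrts hF b, Set.toFinset_setOf]
  have h1 : ∑ b : F, quadraticChar F (1 - u * b) = 0 := by
    let e : F ≃ F := (Equiv.mulLeft₀ u hu).trans (Equiv.subLeft 1)
    have he : ∀ b : F, e b = 1 - u * b := fun b => by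
      simp [e, Equiv.subLeft]
    calc ∑ b : F, quadraticChar F (1 - u * b) = ∑ b : F, quadraticChar F (e b) := by
          simp_rw [he]
      _ = ∑ b : F, quadraticChar F b := Equiv.sum_comp e _
      _ = 0 := quadraticChar_sum_zero hF
  have h2 : ∑ b : F, quadraticChar F b * quadraticChar F (1 - u * b)
      = quadraticChar F u * (-quadraticChar F (-1)) := by
    let e : F ≃ F := Equiv.mulLeft₀ u⁻¹ (inv_ne_zero hu)
    have he : ∀ b : F, e b = u⁻¹ * b := fun b => by simp [e]
    calc ∑ b : F, quadraticChar F b * quadraticChar F (1 - u * b)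
        = ∑ b : F, quadraticChar F (e b) * quadraticChar F (1 - u * e b) :=
          (Equiv.sum_comp e (fun b => quadraticChar F b * quadraticChar F (1 - u * b))).symm
      _ = ∑ b : F, quadraticChar F u⁻¹ * (quadraticChar F b * quadraticChar F (1 - b)) := by
          refine Finset.sum_congr rfl fun b _ => ?_
          rw [he, mul_inv_cancel_left₀ hu, _root_.map_mul]
          ring
      _ = quadraticChar F u⁻¹ * jacobiSum (quadraticChar F) (quadraticChar F) := by
          rw [← Finset.mul_sum]; rfl
      _ = quadraticChar F u * (-quadraticChar F (-1)) := by
          rw [quadChar_inv_val u hu]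
          congr 1
          have hj := jacobiSum_nontrivial_inv (quadraticChar_ne_one (F := F) hF)
          rwa [quadChar_inv_self hF] at hj
  rw [key]
  simp_rw [hcard, smul_eq_mul, add_mul, one_mul, Finset.sum_add_distrib, h1, h2]
  have hneg : (-u : F) = -1 * u := by ring
  rw [hneg, _root_.map_mul]
  ring

/-- The number of points on the conic `x² + u y² = 1` over a finite field. -/
lemma card_conic_field (hF : ringChar F ≠ 2) (u : F) (hu : u ≠ 0) :
    (Nat.card {v : F × F // v.1 ^ 2 + u * v.2 ^ 2 = 1} : ℤ)
      = Fintype.card F - quadraticChar F (-u) := by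
  classical
  have e : {v : F × F // v.1 ^ 2 + u * v.2 ^ 2 = 1}
      ≃ Σ y : F, {x : F // x ^ 2 = 1 - u * y ^ 2} :=
    { toFun := fun v => ⟨v.1.2, v.1.1, by linear_combination v.2⟩
      invFun := fun s => ⟨(s.2.1, s.1), by linear_combination s.2.2⟩
      left_inv := fun v => rfl
      right_inv := fun s => rfl }
  rw [Nat.card_congr e, Nat.card_eq_fintype_card, Fintype.card_sigma]
  push_cast
  have : ∀ y : F, (Fintype.card {x : F // x ^ 2 = 1 - u * y ^ 2} : ℤ)
      = quadraticChar F (1 - u * y ^ 2) + 1 := fun y => by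
    rw [← Nat.card_eq_fintype_card]; exact card_sqrts hF _
  simp_rw [this, Finset.sum_add_distrib, sum_quadChar_affine_sq hF u hu]
  simp [Finset.card_univ]
  ring

end Conic

section Step

lemma zmod_int_eq_iff (n : ℕ) (x y : ℤ) :
    ((x : ZMod n) = (y : ZMod n)) ↔ (n : ℤ) ∣ y - x := by
  rw [ZMod.intCast_eq_intCast_iff]
  exact Int.modEq_iff_dvd

lemma val_int_cast_self (n : ℕ) [NeZero n] (x : ZMod n) :
    (((x.val : ℤ)) : ZMod n) = x := by
  push_cast
  simp [ZMod.natCast_val, ZMod.cast_id]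

variable (p : ℕ) [Fact p.Prime]

lemma eq_of_int_dvd_sub (t t' : ZMod p) (h : (p : ℤ) ∣ ((t'.val : ℤ) - (t.val : ℤ))) :
    t = t' := by
  haveI : NeZero p := ⟨(Fact.out : p.Prime).ne_zero⟩
  have := (zmod_int_eq_iff p _ _).mpr h
  rwa [val_int_cast_self, val_int_cast_self] at this

lemma card_conic_step (hp2 : p ≠ 2) (d : ℤ) (hpd : ¬ (p : ℤ) ∣ d) (k : ℕ) (hk : 1 ≤ k) :
    Nat.card {v : ZMod (p^(k+1)) × ZMod (p^(k+1)) //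
        v.1 ^ 2 + (d : ZMod (p^(k+1))) * v.2 ^ 2 = 1}
      = p * Nat.card {v : ZMod (p^k) × ZMod (p^k) //
          v.1 ^ 2 + (d : ZMod (p^k)) * v.2 ^ 2 = 1} := by
  classical
  have hp : p.Prime := Fact.out
  haveI : NeZero (p ^ k) := ⟨pow_ne_zero _ hp.ne_zero⟩
  haveI : NeZero (p ^ (k+1)) := ⟨pow_ne_zero _ hp.ne_zero⟩
  haveI : NeZero p := ⟨hp.ne_zero⟩
  set q : ℕ := p ^ k with hq
  set Q : ℕ := p ^ (k+1) with hQ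
  have hqz : ((q : ℤ)) ≠ 0 := Int.natCast_ne_zero.mpr (NeZero.ne q)
  have hQq : (Q : ℤ) = (q : ℤ) * (p : ℤ) := by push_cast [hq, hQ, pow_succ]; ring
  have hQq2 : (Q : ℤ) ∣ (q : ℤ) ^ 2 := by
    have : p ^ (k+1) ∣ (p ^ k) ^ 2 := by
      rw [← pow_mul]
      exact pow_dvd_pow p (by omega)
    exact_mod_cast Int.natCast_dvd_natCast.mpr this
  have hpq : (p : ℤ) ∣ (q : ℤ) := by
    exact_mod_cast Int.natCast_dvd_natCast.mpr (dvd_pow_self p (by omega))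
  set π : ZMod Q →+* ZMod q := ZMod.castHom (pow_dvd_pow p (Nat.le_succ k)) (ZMod q) with hπ
  set f : {v : ZMod Q × ZMod Q // v.1 ^ 2 + (d : ZMod Q) * v.2 ^ 2 = 1} →
      {v : ZMod q × ZMod q // v.1 ^ 2 + (d : ZMod q) * v.2 ^ 2 = 1} :=
    fun v => ⟨(π v.1.1, π v.1.2), by
      have h := congrArg π v.2
      simp only [_root_.map_add, _root_.map_mul, _root_.map_pow, _root_.map_one, _root_.map_intCast] at h
      exact h⟩ with hf
  rw [show Nat.card {v : ZMod q × ZMod q // v.1 ^ 2 + (d : ZMod q) * v.2 ^ 2 = 1} =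
    Nat.card {v : ZMod q × ZMod q // v.1 ^ 2 + (d : ZMod q) * v.2 ^ 2 = 1} from rfl]
  refine card_eq_mul_of_fibers f p ?_
  intro w
  -- notation for the base solution
  set a : ZMod q := w.1.1
  set b : ZMod q := w.1.2
  set A : ℤ := (a.val : ℤ) with hA
  set B : ℤ := (b.val : ℤ) with hB
  have hAa : ((A : ZMod q)) = a := val_int_cast_self q a
  have hBb : ((B : ZMod q)) = b := val_int_cast_self q b
  have hq_dvd : (q : ℤ) ∣ (A ^ 2 + d * B ^ 2 - 1) := by
    have h0 : ((A ^ 2 + d * B ^ 2 - 1 : ℤ) : ZMod q) = 0 := by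
      push_cast
      rw [hAa, hBb]
      rw [sub_eq_zero]
      exact w.2
    exact_mod_cast (ZMod.intCast_zmod_eq_zero_iff_dvd _ q).mp h0
  obtain ⟨c, hc⟩ := hq_dvd
  -- the quadratic condition on lifts is a linear condition mod p
  have quad_iff : ∀ T S : ℤ,
      (((A + T * q) ^ 2 + d * (B + S * q) ^ 2 - 1 : ℤ) : ZMod Q) = 0 ↔
        ((c + 2 * A * T + 2 * d * B * S : ℤ) : ZMod p) = 0 := by
    intro T S
    rw [ZMod.intCast_zmod_eq_zero_iff_dvd, ZMod.intCast_zmod_eq_zero_iff_dvd]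
    have e1 : (A + T * q) ^ 2 + d * (B + S * q) ^ 2 - 1
        = (q : ℤ) * (c + 2 * A * T + 2 * d * B * S) + (q : ℤ) ^ 2 * (T ^ 2 + d * S ^ 2) := by
      linear_combination hc
    rw [e1]
    have h2 : (Q : ℤ) ∣ (q : ℤ) ^ 2 * (T ^ 2 + d * S ^ 2) := hQq2.mul_right _
    constructor
    · intro h
      have h3 : (Q : ℤ) ∣ (q : ℤ) * (c + 2 * A * T + 2 * d * B * S) :=
        (dvd_add_right h2).mp (by rwa [add_comm] at h)
      rw [hQq] at h3
      exact (mul_dvd_mul_iff_left hqz).mp h3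
    · intro h
      have h3 : (Q : ℤ) ∣ (q : ℤ) * (c + 2 * A * T + 2 * d * B * S) := by
        rw [hQq]
        exact mul_dvd_mul_left _ h
      exact dvd_add h3 h2
  -- coefficients of the linear equation
  set a₀ : ZMod p := ((c : ℤ) : ZMod p)
  set a₁ : ZMod p := ((2 * A : ℤ) : ZMod p)
  set a₂ : ZMod p := ((2 * d * B : ℤ) : ZMod p)
  have hab : a₁ ≠ 0 ∨ a₂ ≠ 0 := by
    by_contra hcon
    push_neg at hcon
    obtain ⟨h1, h2⟩ := hcon
    have hd1 : (p : ℤ) ∣ 2 * A := (ZMod.intCast_zmod_eq_zero_iff_dvd _ p).mp h1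
    have hd2 : (p : ℤ) ∣ 2 * d * B := (ZMod.intCast_zmod_eq_zero_iff_dvd _ p).mp h2
    have hpZ : Prime (p : ℤ) := Int.prime_iff_natAbs_prime.mpr (by simpa using hp)
    have hp2' : ¬ (p : ℤ) ∣ 2 := by
      intro hdvd
      have : p ∣ 2 := by exact_mod_cast hdvd
      exact hp2 ((Nat.prime_dvd_prime_iff_eq hp Nat.prime_two).mp this)
    have hpA : (p : ℤ) ∣ A := (hpZ.dvd_mul.mp hd1).resolve_left hp2'
    have hpB : (p : ℤ) ∣ B := by
      rcases hpZ.dvd_mul.mp hd2 with h | h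
      · rcases hpZ.dvd_mul.mp h with h' | h'
        · exact absurd h' hp2'
        · exact absurd h' hpd
      · exact h
    have hp1 : (p : ℤ) ∣ 1 := by
      have h4 : (p : ℤ) ∣ A ^ 2 + d * B ^ 2 - 1 := by
        rw [hc]; exact Dvd.dvd.mul_right hpq c
      have h5 : (p : ℤ) ∣ A ^ 2 + d * B ^ 2 :=
        dvd_add (dvd_pow hpA two_ne_zero)
          ((dvd_pow hpB two_ne_zero).mul_left d)
      have := dvd_sub h5 h4
      simpa using this
    have := Int.le_of_dvd one_pos hp1
    have hp1' : 1 < (p : ℤ) := by exact_mod_cast hp.one_lt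
    omega
  have lin_cast : ∀ t₁ t₂ : ZMod p,
      ((c + 2 * A * (t₁.val : ℤ) + 2 * d * B * (t₂.val : ℤ) : ℤ) : ZMod p)
        = ((c : ℤ) : ZMod p) + ((2 * A : ℤ) : ZMod p) * t₁ + ((2 * d * B : ℤ) : ZMod p) * t₂ := by
    intro t₁ t₂
    push_cast [ZMod.natCast_val, ZMod.cast_id]
    ring
  have fst_eq : ∀ T : ℤ, π (((A + T * q : ℤ)) : ZMod Q) = a := by
    intro T
    rw [_root_.map_intCast]
    push_cast
    simp [ZMod.natCast_self, hAa]
  have snd_eq : ∀ S : ℤ, π (((B + S * q : ℤ)) : ZMod Q) = b := by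
    intro S
    rw [_root_.map_intCast]
    push_cast
    simp [ZMod.natCast_self, hBb]
  let Φ : {t : ZMod p × ZMod p //
        ((c : ℤ) : ZMod p) + ((2 * A : ℤ) : ZMod p) * t.1 + ((2 * d * B : ℤ) : ZMod p) * t.2 = 0}
      → {v' : {v : ZMod Q × ZMod Q // v.1 ^ 2 + (d : ZMod Q) * v.2 ^ 2 = 1} // f v' = w} :=
    fun t => ⟨⟨((((A + (t.1.1.val : ℤ) * q : ℤ)) : ZMod Q),
                (((B + (t.1.2.val : ℤ) * q : ℤ)) : ZMod Q)), by
        have hl : ((c + 2 * A * (t.1.1.val : ℤ) + 2 * d * B * (t.1.2.val : ℤ) : ℤ) : ZMod p)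
            = 0 := by rw [lin_cast]; exact t.2
        have h := (quad_iff _ _).mpr hl
        push_cast at h ⊢
        linear_combination h⟩, by
        refine Subtype.ext (Prod.ext_iff.mpr ⟨?_, ?_⟩)
        · exact fst_eq _
        · exact snd_eq _⟩
  have inj : Function.Injective Φ := by
    intro t t' h
    have h1 := congrArg (fun v : {v' : {v : ZMod Q × ZMod Q //
        v.1 ^ 2 + (d : ZMod Q) * v.2 ^ 2 = 1} // f v' = w} => v.1.1.1) h
    have h2 := congrArg (fun v : {v' : {v : ZMod Q × ZMod Q //
        v.1 ^ 2 + (d : ZMod Q) * v.2 ^ 2 = 1} // f v' = w} => v.1.1.2) h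
    refine Subtype.ext (Prod.ext_iff.mpr ⟨?_, ?_⟩)
    · apply eq_of_int_dvd_sub p
      have hd' := (zmod_int_eq_iff Q _ _).mp h1
      have he : (A + ((t'.1.1.val : ℤ)) * q) - (A + ((t.1.1.val : ℤ)) * q)
          = (q : ℤ) * (((t'.1.1.val : ℤ)) - ((t.1.1.val : ℤ))) := by ring
      rw [he, hQq] at hd'
      exact (mul_dvd_mul_iff_left hqz).mp hd'
    · apply eq_of_int_dvd_sub p
      have hd' := (zmod_int_eq_iff Q _ _).mp h2
      have he : (B + ((t'.1.2.val : ℤ)) * q) - (B + ((t.1.2.val : ℤ)) * q)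
          = (q : ℤ) * (((t'.1.2.val : ℤ)) - ((t.1.2.val : ℤ))) := by ring
      rw [he, hQq] at hd'
      exact (mul_dvd_mul_iff_left hqz).mp hd'
  have surj : Function.Surjective Φ := by
    rintro ⟨⟨⟨x, y⟩, hxy⟩, hfv⟩
    have h' := congrArg (fun z => z.1) hfv
    have hx : π x = a := congrArg Prod.fst h'
    have hy : π y = b := congrArg Prod.snd h'
    have hcast : ∀ z : ZMod Q, (((z.val : ℤ)) : ZMod q) = π z := fun z => by
      rw [hπ, ZMod.castHom_apply, ← ZMod.natCast_val, Int.cast_natCast]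
    have hxq : ((A : ZMod q)) = (((x.val : ℤ)) : ZMod q) := by rw [hcast, hx, hAa]
    have hyq : ((B : ZMod q)) = (((y.val : ℤ)) : ZMod q) := by rw [hcast, hy, hBb]
    obtain ⟨j₁, hj₁⟩ := (zmod_int_eq_iff q _ _).mp hxq
    obtain ⟨j₂, hj₂⟩ := (zmod_int_eq_iff q _ _).mp hyq
    set t₁ : ZMod p := ((j₁ : ℤ) : ZMod p) with ht₁
    set t₂ : ZMod p := ((j₂ : ℤ) : ZMod p) with ht₂
    have hpj₁ : (p : ℤ) ∣ (j₁ - (t₁.val : ℤ)) := by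
      have h0 : (((j₁ : ℤ)) : ZMod p) = (((t₁.val : ℤ)) : ZMod p) :=
        (val_int_cast_self p t₁).symm
      exact dvd_sub_comm.mp ((zmod_int_eq_iff p _ _).mp h0)
    have hpj₂ : (p : ℤ) ∣ (j₂ - (t₂.val : ℤ)) := by
      have h0 : (((j₂ : ℤ)) : ZMod p) = (((t₂.val : ℤ)) : ZMod p) :=
        (val_int_cast_self p t₂).symm
      exact dvd_sub_comm.mp ((zmod_int_eq_iff p _ _).mp h0)
    have hlift1 : ((A + (t₁.val : ℤ) * q : ℤ) : ZMod Q) = x := by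
      rw [← val_int_cast_self Q x, zmod_int_eq_iff]
      have he : ((x.val : ℤ)) - (A + (t₁.val : ℤ) * q)
          = (q : ℤ) * (j₁ - (t₁.val : ℤ)) := by linear_combination hj₁
      rw [he, hQq]
      exact mul_dvd_mul_left _ hpj₁
    have hlift2 : ((B + (t₂.val : ℤ) * q : ℤ) : ZMod Q) = y := by
      rw [← val_int_cast_self Q y, zmod_int_eq_iff]
      have he : ((y.val : ℤ)) - (B + (t₂.val : ℤ) * q)
          = (q : ℤ) * (j₂ - (t₂.val : ℤ)) := by linear_combination hj₂
      rw [he, hQq]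
      exact mul_dvd_mul_left _ hpj₂
    have hquad : (((A + (t₁.val : ℤ) * q) ^ 2 + d * (B + (t₂.val : ℤ) * q) ^ 2 - 1 : ℤ)
        : ZMod Q) = 0 := by
      have e1 : (((A + (t₁.val : ℤ) * q) ^ 2 + d * (B + (t₂.val : ℤ) * q) ^ 2 - 1 : ℤ)
          : ZMod Q) = ((A + (t₁.val : ℤ) * q : ℤ) : ZMod Q) ^ 2
            + (d : ZMod Q) * ((B + (t₂.val : ℤ) * q : ℤ) : ZMod Q) ^ 2 - 1 := by
        push_cast
        ring
      rw [e1, hlift1, hlift2, hxy, sub_self]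
    have hlin := (quad_iff _ _).mp hquad
    rw [lin_cast t₁ t₂] at hlin
    refine ⟨⟨(t₁, t₂), hlin⟩, ?_⟩
    refine Subtype.ext (Subtype.ext (Prod.ext_iff.mpr ⟨?_, ?_⟩))
    · exact hlift1
    · exact hlift2
  rw [Nat.card_congr (Equiv.ofBijective Φ ⟨inj, surj⟩).symm,
    card_linear _ _ _ hab, ZMod.card]

end Step

section ConicPow

lemma card_conic_pow (p : ℕ) [Fact p.Prime] (hp2 : p ≠ 2) (d : ℤ) (hpd : ¬ (p : ℤ) ∣ d)
    (k : ℕ) (hk : 1 ≤ k) :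
    (Nat.card {v : ZMod (p^k) × ZMod (p^k) // v.1 ^ 2 + (d : ZMod (p^k)) * v.2 ^ 2 = 1} : ℤ)
      = (p : ℤ) ^ (k - 1) * ((p : ℤ) - legendreSym p (-d)) := by
  have hp : p.Prime := Fact.out
  induction k, hk using Nat.le_induction with
  | base =>
    rw [pow_one]
    have hF : ringChar (ZMod p) ≠ 2 := by
      rw [ZMod.ringChar_zmod_n]
      exact hp2
    have hu : ((d : ZMod p)) ≠ 0 := by
      rw [Ne, ZMod.intCast_zmod_eq_zero_iff_dvd]
      exact hpd
    rw [card_conic_field hF (d : ZMod p) hu, ZMod.card]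
    have : (-(d : ZMod p)) = ((-d : ℤ) : ZMod p) := by push_cast; ring
    rw [this]
    simp [legendreSym]
  | succ k hk ih =>
    rw [card_conic_step p hp2 d hpd k hk]
    push_cast
    rw [ih]
    have hpk : (p : ℤ) * (p : ℤ) ^ (k - 1) = (p : ℤ) ^ k := by
      rw [← pow_succ']
      congr 1
      omega
    rw [← mul_assoc, hpk]

end ConicPow

section QuotRing

open Matrix

variable (d : ℤ) (m : ℕ) [NeZero m]

/-- shorthand -/
noncomputable abbrev mkq : Zsqrtd (-d) →+* Rq d m :=
  Ideal.Quotient.mk (Ideal.span {((m : ℤ) : Zsqrtd (-d))})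

lemma mkq_eq_zero_iff (z : Zsqrtd (-d)) :
    mkq d m z = 0 ↔ (m : ℤ) ∣ z.re ∧ (m : ℤ) ∣ z.im := by
  rw [show mkq d m z = Ideal.Quotient.mk _ z from rfl, Ideal.Quotient.eq_zero_iff_mem,
    Ideal.mem_span_singleton]
  exact Zsqrtd.intCast_dvd _ _

lemma mkq_eq_iff (z w : Zsqrtd (-d)) :
    mkq d m z = mkq d m w ↔ (m : ℤ) ∣ (w.re - z.re) ∧ (m : ℤ) ∣ (w.im - z.im) := by
  rw [eq_comm, ← sub_eq_zero, ← _root_.map_sub, mkq_eq_zero_iff]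
  simp [Zsqrtd.re_sub, Zsqrtd.im_sub]

lemma conjQ_mkq (z : Zsqrtd (-d)) : conjQ d m (mkq d m z) = mkq d m (star z) :=
  Ideal.quotientMap_mk

/-- The parametrization of `ℤ[√-d]/(m)` by pairs of residues. -/
noncomputable def gq : ZMod m × ZMod m → Rq d m :=
  fun v => mkq d m ⟨(v.1.val : ℤ), (v.2.val : ℤ)⟩

lemma gq_bijective : Function.Bijective (gq d m) := by
  constructor
  · intro v v' h
    rw [gq, gq, mkq_eq_iff] at h
    obtain ⟨h1, h2⟩ := h
    have e1 : (((v.1.val : ℤ)) : ZMod m) = (((v'.1.val : ℤ)) : ZMod m) :=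
      (zmod_int_eq_iff m _ _).mpr h1
    have e2 : (((v.2.val : ℤ)) : ZMod m) = (((v'.2.val : ℤ)) : ZMod m) :=
      (zmod_int_eq_iff m _ _).mpr h2
    rw [val_int_cast_self, val_int_cast_self] at e1 e2
    exact Prod.ext_iff.mpr ⟨e1, e2⟩
  · intro x
    obtain ⟨z, rfl⟩ := Ideal.Quotient.mk_surjective x
    refine ⟨((z.re : ZMod m), (z.im : ZMod m)), ?_⟩
    rw [gq, mkq_eq_iff]
    constructor
    · have := val_int_cast_self m ((z.re : ZMod m))
      exact (zmod_int_eq_iff m _ _).mp this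
    · have := val_int_cast_self m ((z.im : ZMod m))
      exact (zmod_int_eq_iff m _ _).mp this

lemma gq_cond_iff (v : ZMod m × ZMod m) :
    gq d m v * conjQ d m (gq d m v) = 1 ↔ v.1 ^ 2 + (d : ZMod m) * v.2 ^ 2 = 1 := by
  set A : ℤ := (v.1.val : ℤ) with hA
  set B : ℤ := (v.2.val : ℤ) with hB
  have hmul : (⟨A, B⟩ : Zsqrtd (-d)) * star (⟨A, B⟩ : Zsqrtd (-d))
      = (⟨A ^ 2 + d * B ^ 2, 0⟩ : Zsqrtd (-d)) := by
    ext
    · simp [Zsqrtd.re_mul]; ring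
    · simp [Zsqrtd.im_mul]; ring
  have h1 : gq d m v * conjQ d m (gq d m v) = mkq d m ⟨A ^ 2 + d * B ^ 2, 0⟩ := by
    rw [gq, conjQ_mkq, ← _root_.map_mul, hmul]
  have h2 : (1 : Rq d m) = mkq d m ⟨1, 0⟩ := by
    rw [show ((⟨1, 0⟩ : Zsqrtd (-d))) = 1 from rfl, _root_.map_one]
  rw [h1, h2, mkq_eq_iff]
  constructor
  · rintro ⟨h, -⟩
    have h' : (((A ^ 2 + d * B ^ 2 : ℤ)) : ZMod m) = ((1 : ℤ) : ZMod m) :=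
      (zmod_int_eq_iff m _ _).mpr h
    push_cast [hA, hB, ZMod.natCast_val, ZMod.cast_id] at h'
    exact h'
  · intro h
    refine ⟨(zmod_int_eq_iff m _ _).mp ?_, by simp⟩
    push_cast [hA, hB, ZMod.natCast_val, ZMod.cast_id]
    exact h

/-- The norm-one subset of `ℤ[√-d]/(m)` is parametrized by the conic mod `m`. -/
noncomputable def normOneEquiv :
    {v : ZMod m × ZMod m // v.1 ^ 2 + (d : ZMod m) * v.2 ^ 2 = 1}
      ≃ {u : Rq d m // u * conjQ d m u = 1} :=
  Equiv.subtypeEquiv (Equiv.ofBijective (gq d m) (gq_bijective d m))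
    (fun v => (gq_cond_iff d m v).symm)

lemma conjQ_involutive (x : Rq d m) : conjQ d m (conjQ d m x) = x := by
  obtain ⟨z, rfl⟩ := Ideal.Quotient.mk_surjective x
  rw [show ((Ideal.Quotient.mk _) z : Rq d m) = mkq d m z from rfl,
    conjQ_mkq, conjQ_mkq]
  simp

end QuotRing

section Unitary

open Matrix

variable {R : Type*} [CommRing R] (n : ℕ)

/-- diag(v,1,...,1) -/
def Dmat (v : R) : Matrix (Fin (n + 1)) (Fin (n + 1)) R :=
  Matrix.diagonal fun i => if i = 0 then v else 1

lemma Dmat_mul (v w : R) : Dmat n v * Dmat n w = Dmat n (v * w) := by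
  rw [Dmat, Dmat, Dmat, Matrix.diagonal_mul_diagonal]
  refine congrArg Matrix.diagonal (funext fun i => ?_)
  by_cases h : i = 0 <;> simp [h]

lemma Dmat_one : Dmat n (1 : R) = 1 := by
  rw [Dmat, ← Matrix.diagonal_one]
  refine congrArg Matrix.diagonal (funext fun i => ?_)
  by_cases h : i = 0 <;> simp [h]

lemma Dmat_det (v : R) : (Dmat n v).det = v := by
  rw [Dmat, Matrix.det_diagonal]
  rw [Finset.prod_ite_eq' Finset.univ (0 : Fin (n + 1)) (fun _ => v)]
  simp

lemma Lmat_det : (Lmat R n).det = -1 := by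
  rw [Lmat, Matrix.det_diagonal]
  rw [Finset.prod_ite_eq' Finset.univ (Fin.last n) (fun _ => (-1 : R))]
  simp

variable (σ : R →+* R)

lemma mem_mul {A B : Matrix (Fin (n + 1)) (Fin (n + 1)) R}
    (hA : A * Lmat R n * (A.map σ)ᵀ = Lmat R n)
    (hB : B * Lmat R n * (B.map σ)ᵀ = Lmat R n) :
    (A * B) * Lmat R n * ((A * B).map σ)ᵀ = Lmat R n := by
  rw [Matrix.map_mul, Matrix.transpose_mul]
  have : A * B * Lmat R n * ((B.map σ)ᵀ * (A.map σ)ᵀ)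
      = A * (B * Lmat R n * (B.map σ)ᵀ) * (A.map σ)ᵀ := by
    simp only [Matrix.mul_assoc]
  rw [this, hB, hA]

lemma Dmat_map (v : R) : (Dmat n v).map σ = Dmat n (σ v) := by
  rw [Dmat, Dmat, Matrix.diagonal_map (_root_.map_zero σ)]
  refine congrArg Matrix.diagonal (funext fun i => ?_)
  by_cases h : i = 0 <;> simp [h, Function.comp]

lemma mem_Dmat {v : R} (hv : v * σ v = 1) :
    Dmat n v * Lmat R n * ((Dmat n v).map σ)ᵀ = Lmat R n := by
  rw [Dmat_map]
  simp only [Dmat, Lmat, Matrix.diagonal_transpose, Matrix.diagonal_mul_diagonal]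
  refine congrArg Matrix.diagonal (funext fun i => ?_)
  by_cases h : i = 0
  · simp only [h, eq_self_iff_true, if_true]
    linear_combination (if (0 : Fin (n + 1)) = Fin.last n then (-1 : R) else 1) * hv
  · simp [h]

lemma det_mem {A : Matrix (Fin (n + 1)) (Fin (n + 1)) R}
    (hA : A * Lmat R n * (A.map σ)ᵀ = Lmat R n) :
    A.det * σ A.det = 1 := by
  have h := congrArg Matrix.det hA
  rw [Matrix.det_mul, Matrix.det_mul, Matrix.det_transpose, ← RingHom.mapMatrix_apply,
    ← RingHom.map_det, Lmat_det] at h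
  linear_combination -h

/-- The factorization `U ≃ N1 × SU`. -/
noncomputable def unitaryEquiv (hσ : ∀ x : R, σ (σ x) = x) :
    {A : Matrix (Fin (n + 1)) (Fin (n + 1)) R // A * Lmat R n * (A.map σ)ᵀ = Lmat R n}
      ≃ {u : R // u * σ u = 1} ×
        {A : Matrix (Fin (n + 1)) (Fin (n + 1)) R //
          A * Lmat R n * (A.map σ)ᵀ = Lmat R n ∧ A.det = 1} where
  toFun A :=
    (⟨A.1.det, det_mem n σ A.2⟩,
     ⟨Dmat n (σ A.1.det) * A.1, by
        refine ⟨mem_mul n σ (mem_Dmat n σ ?_) A.2, ?_⟩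
        · rw [hσ]
          have := det_mem n σ A.2
          linear_combination this
        · rw [Matrix.det_mul, Dmat_det]
          have := det_mem n σ A.2
          linear_combination this⟩)
  invFun uB := ⟨Dmat n uB.1.1 * uB.2.1, mem_mul n σ (mem_Dmat n σ uB.1.2) uB.2.2.1⟩
  left_inv A := by
    apply Subtype.ext
    show Dmat n A.1.det * (Dmat n (σ A.1.det) * A.1) = A.1
    rw [← Matrix.mul_assoc, Dmat_mul, det_mem n σ A.2, Dmat_one, Matrix.one_mul]
  right_inv uB := by
    have hdet : (Dmat n uB.1.1 * uB.2.1).det = uB.1.1 := by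
      rw [Matrix.det_mul, Dmat_det, uB.2.2.2, mul_one]
    refine Prod.ext_iff.mpr ⟨Subtype.ext ?_, Subtype.ext ?_⟩
    · exact hdet
    · show Dmat n (σ (Dmat n uB.1.1 * uB.2.1).det) * (Dmat n uB.1.1 * uB.2.1) = uB.2.1
      rw [hdet, ← Matrix.mul_assoc, Dmat_mul]
      have h1 : σ uB.1.1 * uB.1.1 = 1 := by linear_combination uB.1.2
      rw [h1, Dmat_one, Matrix.one_mul]

end Unitary

/-- Unramified index formula: over `R = ℤ[√-d]/(p^k)` with `p` an odd prime not
dividing `d`, `#U(L,R) = p^(k-1)·(p - (-d/p)) · #SU(L,R)`. -/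
theorem card_U_eq_index_mul_card_SU_unramified (d : ℤ) (hd : 0 < d) (hodd : Odd d)
    (hsf : Squarefree d) (n : ℕ) (hn : 1 ≤ n) (p : ℕ) [Fact p.Prime] (hp2 : p ≠ 2)
    (hpd : ¬ (p : ℤ) ∣ d) (k : ℕ) (hk : 1 ≤ k) :
    (Nat.card {A : Matrix (Fin (n + 1)) (Fin (n + 1)) (Rq d (p ^ k)) //
        A * Lmat (Rq d (p ^ k)) n * (A.map (conjQ d (p ^ k)))ᵀ = Lmat (Rq d (p ^ k)) n} : ℤ)
      = p ^ (k - 1) * ((p : ℤ) - legendreSym p (-d)) *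
        Nat.card {A : Matrix (Fin (n + 1)) (Fin (n + 1)) (Rq d (p ^ k)) //
          A * Lmat (Rq d (p ^ k)) n * (A.map (conjQ d (p ^ k)))ᵀ = Lmat (Rq d (p ^ k)) n ∧
          A.det = 1} := by
  haveI : NeZero (p ^ k) := ⟨pow_ne_zero _ (Fact.out : p.Prime).ne_zero⟩
  rw [show ((p : ℤ) ^ k) = ((p ^ k : ℕ) : ℤ) from (Nat.cast_pow p k).symm]
  rw [Nat.card_congr
    (unitaryEquiv n (conjQ d ((p ^ k : ℕ) : ℤ)) (conjQ_involutive d (p ^ k)))]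
  rw [Nat.card_prod]
  have h1 : (Nat.card {u : Rq d ((p ^ k : ℕ) : ℤ) //
      u * conjQ d ((p ^ k : ℕ) : ℤ) u = 1} : ℤ)
      = (p : ℤ) ^ (k - 1) * ((p : ℤ) - legendreSym p (-d)) := by
    rw [Nat.card_congr (normOneEquiv d (p ^ k)).symm]
    exact card_conic_pow p hp2 d hpd k hk
  push_cast at h1 ⊢
  rw [h1]
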